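/- Let Σ and Σ̂ be symmetric positive semidefinite d×d matrices with eigenvalues λ_1 ≥ ... ≥ λ_d of Σ, and let Δ_k = λ_k − λ_{k+1} > 0. If ‖Σ̂ − Σ‖_op ≤ Δ_k/2, then the orthogonal projectors P_k and P̂_k onto the top-k eigenspaces of Σ and Σ̂ respectively satisfy ‖P̂_k − P_k‖_op ≤ (2/Δ_k) ‖Σ̂ − Σ‖_op (up to a universal constant). -/

import Mathlib

open MeasureTheory Set Finset
open scoped RealInnerProductSpace

section DKaux
variable {d : ℕ}

lemma DK.intExp {b : ℝ} (hb : 0 < b) :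
    ∫ t in Set.Ioi (0:ℝ), Real.exp (-b * t) = 1 / b := by
  have hderiv : ∀ x ∈ Set.Ici (0:ℝ),
      HasDerivAt (fun t => -(Real.exp (-b*t)) / b) (Real.exp (-b*x)) x := by
    intro x _
    have h1 : HasDerivAt (fun t : ℝ => -b * t) (-b) x := by
      simpa using (hasDerivAt_id x).const_mul (-b)
    have h2 := (h1.exp.neg).div_const b
    refine h2.congr_deriv ?_
    field_simp
  have htends : Filter.Tendsto (fun t => -(Real.exp (-b*t)) / b) Filter.atTop (nhds 0) := by
    have h3 : Filter.Tendsto (fun t : ℝ => Real.exp (-b*t)) Filter.atTop (nhds 0) :=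
      Real.tendsto_exp_atBot.comp
        (Filter.tendsto_id.const_mul_atTop_of_neg (neg_neg_iff_pos.2 hb))
    simpa using (h3.neg).div_const b
  have h4 := MeasureTheory.integral_Ioi_of_hasDerivAt_of_tendsto' hderiv
      (exp_neg_integrableOn_Ioi 0 hb) htends
  simp only [neg_mul] at h4 ⊢
  rw [h4]
  simp
  field_simp


lemma DK.expand (hd : 0 < d) {w : Fin d → EuclideanSpace ℝ (Fin d)} (hw : Orthonormal ℝ w)
    (x : EuclideanSpace ℝ (Fin d)) : ∑ i, (⟪w i, x⟫) • w i = x := by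
  haveI : Nonempty (Fin d) := Fin.pos_iff_nonempty.mp hd
  let b : OrthonormalBasis (Fin d) ℝ (EuclideanSpace ℝ (Fin d)) :=
    (basisOfOrthonormalOfCardEqFinrank hw (by simp)).toOrthonormalBasis
      (by rw [coe_basisOfOrthonormalOfCardEqFinrank]; exact hw)
  have hcoe : ⇑b = w := by
    simp only [b, Module.Basis.coe_toOrthonormalBasis, coe_basisOfOrthonormalOfCardEqFinrank]
  have h := b.sum_repr' x
  rwa [hcoe] at h


lemma DK.parseval (hd : 0 < d) {w : Fin d → EuclideanSpace ℝ (Fin d)} (hw : Orthonormal ℝ w)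
    (x : EuclideanSpace ℝ (Fin d)) : ∑ i, (⟪w i, x⟫)^2 = ‖x‖^2 := by
  have h1 : ⟪x, x⟫ = ∑ i, (starRingEnd ℝ) (⟪w i, x⟫) * ⟪w i, x⟫ := by
    conv_lhs => rw [← DK.expand hd hw x]
    exact hw.inner_sum _ _ _
  simp only [starRingEnd_apply, star_trivial] at h1
  rw [← real_inner_self_eq_norm_sq, h1]
  exact Finset.sum_congr rfl fun i _ => by ring


lemma DK.eig {v : Fin d → EuclideanSpace ℝ (Fin d)} (hv : Orthonormal ℝ v)
    (lam : Fin d → ℝ) (j : Fin d) :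
    ∑ i, lam i • ((⟪v i, v j⟫) • v i) = lam j • v j := by
  rw [Finset.sum_eq_single j]
  · simp [orthonormal_iff_ite.mp hv, hv.1 j]
  · intro i _ hne
    simp [orthonormal_iff_ite.mp hv, hne]
  · simp

-- inner of a basis vector against the formula operator


lemma DK.inner_apply {w : Fin d → EuclideanSpace ℝ (Fin d)} (hw : Orthonormal ℝ w)
    (mu : Fin d → ℝ) (x : EuclideanSpace ℝ (Fin d)) (i : Fin d) :
    ⟪w i, ∑ l, mu l • ((⟪w l, x⟫) • w l)⟫ = mu i * ⟪w i, x⟫ := by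
  rw [inner_sum]
  rw [Finset.sum_eq_single i]
  · rw [real_inner_smul_right, real_inner_smul_right]
    simp [orthonormal_iff_ite.mp hw, hw.1 i]
  · intro l _ hne
    rw [real_inner_smul_right, real_inner_smul_right]
    simp [orthonormal_iff_ite.mp hw, (Ne.symm hne)]
  · simp

-- symmetry of the quadratic form of the formula operator


lemma DK.quad {w : Fin d → EuclideanSpace ℝ (Fin d)}
    {Sh : EuclideanSpace ℝ (Fin d) →L[ℝ] EuclideanSpace ℝ (Fin d)} {mu : Fin d → ℝ}
    (hSh : ∀ x, Sh x = ∑ l, mu l • ((⟪w l, x⟫) • w l))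
    (x : EuclideanSpace ℝ (Fin d)) : ⟪x, Sh x⟫ = ∑ i, mu i * (⟪w i, x⟫)^2 := by
  rw [hSh x, inner_sum]
  refine Finset.sum_congr rfl fun i _ => ?_
  rw [real_inner_smul_right, real_inner_smul_right, real_inner_comm x (w i)]
  ring


lemma DK.core {d : ℕ} {v w : Fin d → EuclideanSpace ℝ (Fin d)}
    (hv : Orthonormal ℝ v) (hw : Orthonormal ℝ w)
    (Eop : EuclideanSpace ℝ (Fin d) →L[ℝ] EuclideanSpace ℝ (Fin d))
    (S T : Finset (Fin d)) (a b al be : Fin d → ℝ) (αs βs δ : ℝ) (hδ : 0 < δ)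
    (hS : ∀ i ∈ S, al i ≤ αs) (hT : ∀ j ∈ T, βs ≤ be j) (hgap : αs + δ ≤ βs) :
    |∑ i ∈ S, ∑ j ∈ T, a i * b j * ⟪w i, Eop (v j)⟫ / (be j - al i)|
      ≤ ‖Eop‖ / δ * Real.sqrt (∑ i ∈ S, (a i) ^ 2) * Real.sqrt (∑ j ∈ T, (b j) ^ 2) := by
  classical
  set A := Real.sqrt (∑ i ∈ S, (a i) ^ 2) with hA
  set B := Real.sqrt (∑ j ∈ T, (b j) ^ 2) with hB
  have hA0 : 0 ≤ A := Real.sqrt_nonneg _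
  have hB0 : 0 ≤ B := Real.sqrt_nonneg _
  set c : Fin d × Fin d → ℝ := fun p => a p.1 * b p.2 * ⟪w p.1, Eop (v p.2)⟫ with hc
  set r : Fin d × Fin d → ℝ := fun p => be p.2 - al p.1 with hr
  have hrδ : ∀ p ∈ S ×ˢ T, δ ≤ r p := by
    intro p hp
    rw [Finset.mem_product] at hp
    have := hS p.1 hp.1
    have := hT p.2 hp.2
    simp only [hr]
    linarith
  have hr0 : ∀ p ∈ S ×ˢ T, 0 < r p := fun p hp => lt_of_lt_of_le hδ (hrδ p hp)
  -- rewrite double sum as sum over product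
  rw [← Finset.sum_product']
  -- each term's integral representation
  have hterm : ∀ p ∈ S ×ˢ T,
      a p.1 * b p.2 * ⟪w p.1, Eop (v p.2)⟫ / (be p.2 - al p.1)
        = ∫ t in Set.Ioi (0:ℝ), c p * Real.exp (-(r p) * t) := by
    intro p hp
    rw [MeasureTheory.integral_const_mul, DK.intExp (hr0 p hp)]
    simp only [hc, hr]
    rw [mul_one_div]
  rw [Finset.sum_congr rfl hterm]
  have hint : ∀ p ∈ S ×ˢ T,
      Integrable (fun t => c p * Real.exp (-(r p) * t)) (volume.restrict (Set.Ioi (0:ℝ))) :=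
    fun p hp => (exp_neg_integrableOn_Ioi 0 (hr0 p hp)).const_mul (c p)
  rw [← MeasureTheory.integral_finset_sum _ hint]
  -- bound the integrand
  have hbound : ∀ t ∈ Set.Ioi (0:ℝ),
      |∑ p ∈ S ×ˢ T, c p * Real.exp (-(r p) * t)|
        ≤ ‖Eop‖ * A * B * Real.exp (-δ * t) := by
    intro t ht
    have ht0 : (0:ℝ) ≤ t := le_of_lt ht
    set u : EuclideanSpace ℝ (Fin d) :=
      ∑ i ∈ S, (a i * Real.exp ((al i - αs) * t)) • w i with hu
    set y : EuclideanSpace ℝ (Fin d) :=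
      ∑ j ∈ T, (b j * Real.exp ((βs - be j) * t)) • v j with hy
    have hinner : ⟪u, Eop y⟫
        = ∑ i ∈ S, ∑ j ∈ T, (a i * Real.exp ((al i - αs) * t))
            * ((b j * Real.exp ((βs - be j) * t)) * ⟪w i, Eop (v j)⟫) := by
      rw [hu, hy, map_sum, sum_inner]
      refine Finset.sum_congr rfl fun i _ => ?_
      rw [inner_sum]
      refine Finset.sum_congr rfl fun j _ => ?_
      rw [ContinuousLinearMap.map_smul, real_inner_smul_left, real_inner_smul_right]
    have hsum_eq : ∑ p ∈ S ×ˢ T, c p * Real.exp (-(r p) * t)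
        = Real.exp (-(βs - αs) * t) * ⟪u, Eop y⟫ := by
      rw [hinner, Finset.sum_product]
      rw [Finset.mul_sum]
      refine Finset.sum_congr rfl fun i _ => ?_
      rw [Finset.mul_sum]
      refine Finset.sum_congr rfl fun j _ => ?_
      have harg : -(r (i, j)) * t = ((al i - αs) * t + ((βs - be j) * t + (-(βs - αs)) * t)) := by
        simp only [hr]; ring
      rw [harg, Real.exp_add, Real.exp_add]
      simp only [hc]
      ring
    have hun : ‖u‖ ≤ A := by
      have h1 : ⟪u, u⟫ = ∑ i ∈ S, (a i * Real.exp ((al i - αs) * t))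
          * (a i * Real.exp ((al i - αs) * t)) := by
        have := hw.inner_sum (fun i => a i * Real.exp ((al i - αs) * t))
          (fun i => a i * Real.exp ((al i - αs) * t)) S
        simpa using this
      have h2 : ‖u‖ ^ 2 ≤ ∑ i ∈ S, (a i) ^ 2 := by
        rw [← real_inner_self_eq_norm_sq, h1]
        refine Finset.sum_le_sum fun i hi => ?_
        have he : Real.exp ((al i - αs) * t) ≤ 1 := by
          rw [Real.exp_le_one_iff]
          have : al i - αs ≤ 0 := by linarith [hS i hi]
          exact mul_nonpos_of_nonpos_of_nonneg this ht0
        have he0 : 0 ≤ Real.exp ((al i - αs) * t) := Real.exp_nonneg _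
        have he2 : Real.exp ((al i - αs) * t) * Real.exp ((al i - αs) * t) ≤ 1 :=
          mul_le_one₀ he he0 he
        calc a i * Real.exp ((al i - αs) * t) * (a i * Real.exp ((al i - αs) * t))
            = (a i)^2 * (Real.exp ((al i - αs) * t) * Real.exp ((al i - αs) * t)) := by ring
          _ ≤ (a i)^2 * 1 := mul_le_mul_of_nonneg_left he2 (sq_nonneg _)
          _ = (a i)^2 := mul_one _
      have := Real.sqrt_le_sqrt h2
      rwa [Real.sqrt_sq (norm_nonneg u)] at this
    have hyn : ‖y‖ ≤ B := by
      have h1 : ⟪y, y⟫ = ∑ j ∈ T, (b j * Real.exp ((βs - be j) * t))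
          * (b j * Real.exp ((βs - be j) * t)) := by
        have := hv.inner_sum (fun j => b j * Real.exp ((βs - be j) * t))
          (fun j => b j * Real.exp ((βs - be j) * t)) T
        simpa using this
      have h2 : ‖y‖ ^ 2 ≤ ∑ j ∈ T, (b j) ^ 2 := by
        rw [← real_inner_self_eq_norm_sq, h1]
        refine Finset.sum_le_sum fun j hj => ?_
        have he : Real.exp ((βs - be j) * t) ≤ 1 := by
          rw [Real.exp_le_one_iff]
          have : βs - be j ≤ 0 := by linarith [hT j hj]
          exact mul_nonpos_of_nonpos_of_nonneg this ht0
        have he0 : 0 ≤ Real.exp ((βs - be j) * t) := Real.exp_nonneg _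
        have he2 : Real.exp ((βs - be j) * t) * Real.exp ((βs - be j) * t) ≤ 1 :=
          mul_le_one₀ he he0 he
        calc b j * Real.exp ((βs - be j) * t) * (b j * Real.exp ((βs - be j) * t))
            = (b j)^2 * (Real.exp ((βs - be j) * t) * Real.exp ((βs - be j) * t)) := by ring
          _ ≤ (b j)^2 * 1 := mul_le_mul_of_nonneg_left he2 (sq_nonneg _)
          _ = (b j)^2 := mul_one _
      have := Real.sqrt_le_sqrt h2
      rwa [Real.sqrt_sq (norm_nonneg y)] at this
    rw [hsum_eq, abs_mul, abs_of_nonneg (Real.exp_nonneg _)]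
    have hEuy : |⟪u, Eop y⟫| ≤ ‖Eop‖ * A * B := by
      calc |⟪u, Eop y⟫| ≤ ‖u‖ * ‖Eop y‖ := abs_real_inner_le_norm u (Eop y)
        _ ≤ ‖u‖ * (‖Eop‖ * ‖y‖) := by
            exact mul_le_mul_of_nonneg_left (Eop.le_opNorm y) (norm_nonneg u)
        _ ≤ A * (‖Eop‖ * B) := by
            apply mul_le_mul hun _ (by positivity) hA0
            exact mul_le_mul_of_nonneg_left hyn (norm_nonneg Eop)
        _ = ‖Eop‖ * A * B := by ring
    have hexp : Real.exp (-(βs - αs) * t) ≤ Real.exp (-δ * t) := by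
      apply Real.exp_le_exp.mpr
      apply mul_le_mul_of_nonneg_right _ ht0
      linarith
    calc Real.exp (-(βs - αs) * t) * |⟪u, Eop y⟫|
        ≤ Real.exp (-δ * t) * (‖Eop‖ * A * B) := by
          apply mul_le_mul hexp hEuy (abs_nonneg _) (Real.exp_nonneg _)
      _ = ‖Eop‖ * A * B * Real.exp (-δ * t) := by ring
  -- integrate the bound
  have hg_int : Integrable (fun t => ∑ p ∈ S ×ˢ T, c p * Real.exp (-(r p) * t))
      (volume.restrict (Set.Ioi (0:ℝ))) := MeasureTheory.integrable_finset_sum _ hint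
  have hbd_int : Integrable (fun t => ‖Eop‖ * A * B * Real.exp (-δ * t))
      (volume.restrict (Set.Ioi (0:ℝ))) := (exp_neg_integrableOn_Ioi 0 hδ).const_mul _
  calc |∫ t in Set.Ioi (0:ℝ), ∑ p ∈ S ×ˢ T, c p * Real.exp (-(r p) * t)|
      = ‖∫ t in Set.Ioi (0:ℝ), ∑ p ∈ S ×ˢ T, c p * Real.exp (-(r p) * t)‖ :=
        (Real.norm_eq_abs _).symm
    _ ≤ ∫ t in Set.Ioi (0:ℝ), ‖∑ p ∈ S ×ˢ T, c p * Real.exp (-(r p) * t)‖ :=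
        MeasureTheory.norm_integral_le_integral_norm _
    _ = ∫ t in Set.Ioi (0:ℝ), |∑ p ∈ S ×ˢ T, c p * Real.exp (-(r p) * t)| := by
        simp [Real.norm_eq_abs]
    _ ≤ ∫ t in Set.Ioi (0:ℝ), ‖Eop‖ * A * B * Real.exp (-δ * t) := by
        apply MeasureTheory.setIntegral_mono_on hg_int.abs hbd_int measurableSet_Ioi
        exact hbound
    _ = ‖Eop‖ * A * B * (1 / δ) := by
        rw [MeasureTheory.integral_const_mul, DK.intExp hδ]
    _ = ‖Eop‖ / δ * A * B := by ring


lemma DK.entry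
    {Sg Sh : EuclideanSpace ℝ (Fin d) →L[ℝ] EuclideanSpace ℝ (Fin d)}
    {lam mu : Fin d → ℝ} {v w : Fin d → EuclideanSpace ℝ (Fin d)}
    (hv : Orthonormal ℝ v) (hw : Orthonormal ℝ w)
    (hSg : ∀ x, Sg x = ∑ i, lam i • ((⟪v i, x⟫) • v i))
    (hSh : ∀ x, Sh x = ∑ i, mu i • ((⟪w i, x⟫) • w i))
    (i j : Fin d) :
    ⟪w i, v j⟫ * (lam j - mu i) = ⟪w i, (Sg - Sh) (v j)⟫ := by
  have h1 : Sg (v j) = lam j • v j := by rw [hSg]; exact DK.eig hv lam j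
  have h2 : ⟪w i, Sh (v j)⟫ = mu i * ⟪w i, v j⟫ := by
    rw [hSh]; exact DK.inner_apply hw mu (v j) i
  rw [ContinuousLinearMap.sub_apply, inner_sub_right, h1, real_inner_smul_right, h2]
  ring


lemma DK.weyl {m : ℕ} (hm : m < d)
    (Sg Sh : EuclideanSpace ℝ (Fin d) →L[ℝ] EuclideanSpace ℝ (Fin d))
    (lam mu : Fin d → ℝ) (v w : Fin d → EuclideanSpace ℝ (Fin d))
    (hv : Orthonormal ℝ v) (hw : Orthonormal ℝ w)
    (hlam : Antitone lam) (hmu : Antitone mu)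
    (hSg : ∀ x, Sg x = ∑ i, lam i • ((⟪v i, x⟫) • v i))
    (hSh : ∀ x, Sh x = ∑ i, mu i • ((⟪w i, x⟫) • w i)) :
    mu ⟨m, hm⟩ ≤ lam ⟨m, hm⟩ + ‖Sh - Sg‖ := by
  classical
  have hd : 0 < d := by omega
  have hmd : m + 1 ≤ d := hm
  -- the constraint map
  let A : (Fin (m+1) → ℝ) →ₗ[ℝ] (Fin m → ℝ) :=
    { toFun := fun c j => ∑ i : Fin (m+1), c i * ⟪v (Fin.castLE hm.le j), w (Fin.castLE hmd i)⟫
      map_add' := by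
        intro c₁ c₂
        funext j
        simp [add_mul, Finset.sum_add_distrib]
      map_smul' := by
        intro r c₀
        funext j
        simp [Finset.mul_sum, mul_assoc] }
  have hninj : ¬ Function.Injective A := by
    intro hinj
    have := LinearMap.finrank_le_finrank_of_injective hinj
    simp [Module.finrank_pi] at this
  rw [Function.not_injective_iff] at hninj
  obtain ⟨c₁, c₂, hEq, hne⟩ := hninj
  set c : Fin (m+1) → ℝ := c₁ - c₂ with hcdef
  have hc0 : c ≠ 0 := sub_ne_zero_of_ne hne
  have hAc : A c = 0 := by rw [hcdef, map_sub, hEq, sub_self]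
  set x : EuclideanSpace ℝ (Fin d) := ∑ i : Fin (m+1), c i • w (Fin.castLE hmd i) with hx
  -- coefficients
  have hwsub : Orthonormal ℝ (fun i : Fin (m+1) => w (Fin.castLE hmd i)) :=
    hw.comp _ (Fin.castLE_injective hmd)
  have hcoef : ∀ i : Fin (m+1), ⟪w (Fin.castLE hmd i), x⟫ = c i := by
    intro i
    rw [hx]
    exact hwsub.inner_right_fintype c i
  have hx0 : x ≠ 0 := by
    intro h
    apply hc0
    funext i
    have := hcoef i
    rw [h, inner_zero_right] at this
    exact this.symm
  -- vanishing coefficients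
  have hvx : ∀ j : Fin d, (j : ℕ) < m → ⟪v j, x⟫ = 0 := by
    intro j hj
    have h1 : (A c) ⟨(j : ℕ), hj⟩ = 0 := by rw [hAc]; rfl
    have h2 : Fin.castLE hm.le ⟨(j : ℕ), hj⟩ = j := by
      apply Fin.ext; rfl
    calc ⟪v j, x⟫ = ∑ i : Fin (m+1), c i * ⟪v j, w (Fin.castLE hmd i)⟫ := by
          rw [hx, inner_sum]
          exact Finset.sum_congr rfl fun i _ => real_inner_smul_right _ _ _
      _ = (A c) ⟨(j : ℕ), hj⟩ := by
          simp only [A, LinearMap.coe_mk, AddHom.coe_mk]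
          rw [h2]
      _ = 0 := h1
  have hwx : ∀ i : Fin d, m < (i : ℕ) → ⟪w i, x⟫ = 0 := by
    intro i hi
    rw [hx, inner_sum]
    apply Finset.sum_eq_zero
    intro l _
    rw [real_inner_smul_right]
    have : i ≠ Fin.castLE hmd l := by
      intro h
      have : (i : ℕ) = (l : ℕ) := by rw [h]; rfl
      omega
    simp [orthonormal_iff_ite.mp hw, this]
  -- quadratic form bounds
  have hxsq : (0:ℝ) < ‖x‖^2 := pow_pos (norm_pos_iff.mpr hx0) 2
  have hSh_low : mu ⟨m, hm⟩ * ‖x‖^2 ≤ ⟪x, Sh x⟫ := by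
    rw [DK.quad hSh x, ← DK.parseval hd hw x, Finset.mul_sum]
    apply Finset.sum_le_sum
    intro i _
    by_cases hi : (i : ℕ) ≤ m
    · have : mu i ≥ mu ⟨m, hm⟩ := hmu (by exact hi)
      exact mul_le_mul_of_nonneg_right this (sq_nonneg _)
    · rw [hwx i (by omega)]
      simp
  have hSg_up : ⟪x, Sg x⟫ ≤ lam ⟨m, hm⟩ * ‖x‖^2 := by
    rw [DK.quad hSg x, ← DK.parseval hd hv x, Finset.mul_sum]
    apply Finset.sum_le_sum
    intro j _
    by_cases hj : (j : ℕ) < m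
    · rw [hvx j hj]; simp
    · have : lam j ≤ lam ⟨m, hm⟩ := hlam (by exact Nat.le_of_not_lt hj)
      exact mul_le_mul_of_nonneg_right this (sq_nonneg _)
  have hE : ⟪x, Sh x⟫ - ⟪x, Sg x⟫ ≤ ‖Sh - Sg‖ * ‖x‖^2 := by
    have h1 : ⟪x, Sh x⟫ - ⟪x, Sg x⟫ = ⟪x, (Sh - Sg) x⟫ := by
      rw [ContinuousLinearMap.sub_apply, inner_sub_right]
    rw [h1]
    calc ⟪x, (Sh - Sg) x⟫ ≤ ‖x‖ * ‖(Sh - Sg) x‖ := real_inner_le_norm _ _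
      _ ≤ ‖x‖ * (‖Sh - Sg‖ * ‖x‖) :=
          mul_le_mul_of_nonneg_left ((Sh - Sg).le_opNorm x) (norm_nonneg x)
      _ = ‖Sh - Sg‖ * ‖x‖^2 := by ring
  have : mu ⟨m, hm⟩ * ‖x‖^2 ≤ (lam ⟨m, hm⟩ + ‖Sh - Sg‖) * ‖x‖^2 := by nlinarith
  exact le_of_mul_le_mul_right this hxsq


lemma DK.sideA {k : ℕ} (hk1 : 1 ≤ k) (hkd : k < d)
    {Sg Sh : EuclideanSpace ℝ (Fin d) →L[ℝ] EuclideanSpace ℝ (Fin d)}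
    {lam mu : Fin d → ℝ} {v w : Fin d → EuclideanSpace ℝ (Fin d)}
    (hv : Orthonormal ℝ v) (hw : Orthonormal ℝ w)
    (hlam : Antitone lam) (hmu : Antitone mu)
    (hSg : ∀ x, Sg x = ∑ i, lam i • ((⟪v i, x⟫) • v i))
    (hSh : ∀ x, Sh x = ∑ i, mu i • ((⟪w i, x⟫) • w i))
    {δ : ℝ} (hδ : 0 < δ)
    (hgap : mu ⟨k, hkd⟩ + δ ≤ lam ⟨k - 1, lt_of_le_of_lt (Nat.sub_le k 1) hkd⟩)
    (q y : EuclideanSpace ℝ (Fin d))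
    (hq : q = ∑ j ∈ Finset.univ.filter fun j : Fin d => (j : ℕ) < k, (⟪v j, y⟫) • v j) :
    ‖q - ∑ i ∈ Finset.univ.filter fun i : Fin d => (i : ℕ) < k, (⟪w i, q⟫) • w i‖
      ≤ ‖Sh - Sg‖ / δ * ‖y‖ := by
  classical
  have hd : 0 < d := by omega
  set T : Finset (Fin d) := Finset.univ.filter fun j : Fin d => (j : ℕ) < k with hT
  set S : Finset (Fin d) := Finset.univ.filter fun j : Fin d => ¬ (j : ℕ) < k with hS
  set z := q - ∑ i ∈ T, (⟪w i, q⟫) • w i with hzdef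
  have hz : z = ∑ i ∈ S, (⟪w i, q⟫) • w i := by
    have hsplit : (∑ i ∈ T, (⟪w i, q⟫) • w i) + ∑ i ∈ S, (⟪w i, q⟫) • w i
        = ∑ i, (⟪w i, q⟫) • w i :=
      Finset.sum_filter_add_sum_filter_not Finset.univ _ _
    rw [hzdef]
    nth_rewrite 1 [← DK.expand hd hw q]
    rw [← hsplit]
    abel
  -- ‖z‖² as a sum of squares of coefficients
  have hnz : ‖z‖^2 = ∑ i ∈ S, (⟪w i, q⟫)^2 := by
    rw [← real_inner_self_eq_norm_sq, hz]
    have := hw.inner_sum (fun i => (⟪w i, q⟫)) (fun i => (⟪w i, q⟫)) S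
    rw [this]
    simp only [starRingEnd_apply, star_trivial]
    exact Finset.sum_congr rfl fun i _ => by ring
  -- denominators are at least δ
  have hne : ∀ i ∈ S, ∀ j ∈ T, δ ≤ lam j - mu i := by
    intro i hi j hj
    rw [hS, Finset.mem_filter] at hi
    rw [hT, Finset.mem_filter] at hj
    have h1 : mu i ≤ mu ⟨k, hkd⟩ := hmu (by rw [Fin.le_def]; simpa using Nat.le_of_not_lt hi.2)
    have h2 : lam ⟨k - 1, lt_of_le_of_lt (Nat.sub_le k 1) hkd⟩ ≤ lam j := hlam (by rw [Fin.le_def]; simp; omega)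
    linarith
  -- expand coefficients
  have hcoef : ∀ i ∈ S, ⟪w i, q⟫ = ∑ j ∈ T, ⟪v j, y⟫ * ⟪w i, v j⟫ := by
    intro i _
    rw [hq, inner_sum]
    exact Finset.sum_congr rfl fun j _ => real_inner_smul_right _ _ _
  have hkey : ‖z‖^2 = ∑ i ∈ S, ∑ j ∈ T,
      (⟪w i, q⟫) * (⟪v j, y⟫) * ⟪w i, (Sg - Sh) (v j)⟫ / (lam j - mu i) := by
    rw [hnz]
    refine Finset.sum_congr rfl fun i hi => ?_
    calc (⟪w i, q⟫)^2 = ⟪w i, q⟫ * ⟪w i, q⟫ := sq _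
      _ = ∑ j ∈ T, ⟪w i, q⟫ * (⟪v j, y⟫ * ⟪w i, v j⟫) := by
          rw [← Finset.mul_sum, ← hcoef i hi]
      _ = ∑ j ∈ T, (⟪w i, q⟫) * (⟪v j, y⟫) * ⟪w i, (Sg - Sh) (v j)⟫ / (lam j - mu i) := by
          refine Finset.sum_congr rfl fun j hj => ?_
          have hd0 : lam j - mu i ≠ 0 := by
            have := hne i hi j hj; linarith
          rw [← DK.entry hv hw hSg hSh i j]
          field_simp
  -- apply the core bound
  have hbd := DK.core hv hw (Sg - Sh) S T (fun i => ⟪w i, q⟫) (fun j => ⟪v j, y⟫) mu lam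
      (mu ⟨k, hkd⟩) (lam ⟨k - 1, lt_of_le_of_lt (Nat.sub_le k 1) hkd⟩) δ hδ
      (fun i hi => by
        rw [hS, Finset.mem_filter] at hi
        exact hmu (by rw [Fin.le_def]; simpa using Nat.le_of_not_lt hi.2))
      (fun j hj => by
        rw [hT, Finset.mem_filter] at hj
        exact hlam (by rw [Fin.le_def]; simp; omega))
      hgap
  rw [← hkey] at hbd
  rw [abs_of_nonneg (by positivity)] at hbd
  have hzn : Real.sqrt (∑ i ∈ S, (⟪w i, q⟫)^2) = ‖z‖ := by
    rw [← hnz, Real.sqrt_sq (norm_nonneg z)]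
  have hyn : Real.sqrt (∑ j ∈ T, (⟪v j, y⟫)^2) ≤ ‖y‖ := by
    have h1 : ∑ j ∈ T, (⟪v j, y⟫)^2 ≤ ∑ j, (⟪v j, y⟫)^2 :=
      Finset.sum_le_sum_of_subset_of_nonneg (Finset.subset_univ T)
        (fun j _ _ => sq_nonneg _)
    rw [DK.parseval hd hv y] at h1
    have := Real.sqrt_le_sqrt h1
    rwa [Real.sqrt_sq (norm_nonneg y)] at this
  rw [hzn] at hbd
  have hnorm_eq : ‖Sg - Sh‖ = ‖Sh - Sg‖ := norm_sub_rev _ _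
  rw [hnorm_eq] at hbd
  -- conclude
  rcases eq_or_lt_of_le (norm_nonneg z) with h0 | hpos
  · rw [← h0]
    positivity
  · have h2 : ‖z‖^2 ≤ ‖Sh - Sg‖ / δ * ‖z‖ * ‖y‖ := by
      calc ‖z‖^2 ≤ ‖Sh - Sg‖ / δ * ‖z‖ * Real.sqrt (∑ j ∈ T, (⟪v j, y⟫)^2) := hbd
        _ ≤ ‖Sh - Sg‖ / δ * ‖z‖ * ‖y‖ := by
            apply mul_le_mul_of_nonneg_left hyn
            positivity
    have h3 : ‖z‖ * ‖z‖ ≤ (‖Sh - Sg‖ / δ * ‖y‖) * ‖z‖ := by nlinarith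
    exact le_of_mul_le_mul_right h3 hpos


lemma DK.sideB {k : ℕ} (hk1 : 1 ≤ k) (hkd : k < d)
    {Sg Sh : EuclideanSpace ℝ (Fin d) →L[ℝ] EuclideanSpace ℝ (Fin d)}
    {lam mu : Fin d → ℝ} {v w : Fin d → EuclideanSpace ℝ (Fin d)}
    (hv : Orthonormal ℝ v) (hw : Orthonormal ℝ w)
    (hlam : Antitone lam) (hmu : Antitone mu)
    (hSg : ∀ x, Sg x = ∑ i, lam i • ((⟪v i, x⟫) • v i))
    (hSh : ∀ x, Sh x = ∑ i, mu i • ((⟪w i, x⟫) • w i))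
    {δ : ℝ} (hδ : 0 < δ)
    (hgap : lam ⟨k, hkd⟩ + δ ≤ mu ⟨k - 1, lt_of_le_of_lt (Nat.sub_le k 1) hkd⟩)
    (q y : EuclideanSpace ℝ (Fin d))
    (hq : q = ∑ j ∈ Finset.univ.filter fun j : Fin d => (j : ℕ) < k, (⟪v j, y⟫) • v j) :
    ‖∑ i ∈ Finset.univ.filter fun i : Fin d => (i : ℕ) < k, (⟪w i, y - q⟫) • w i‖
      ≤ ‖Sh - Sg‖ / δ * ‖y‖ := by
  classical
  have hd : 0 < d := by omega
  set T : Finset (Fin d) := Finset.univ.filter fun j : Fin d => (j : ℕ) < k with hT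
  set S : Finset (Fin d) := Finset.univ.filter fun j : Fin d => ¬ (j : ℕ) < k with hS
  set z := ∑ i ∈ T, (⟪w i, y - q⟫) • w i with hzdef
  have hrs : y - q = ∑ j ∈ S, (⟪v j, y⟫) • v j := by
    have hsplit : (∑ j ∈ T, (⟪v j, y⟫) • v j) + ∑ j ∈ S, (⟪v j, y⟫) • v j
        = ∑ j, (⟪v j, y⟫) • v j :=
      Finset.sum_filter_add_sum_filter_not Finset.univ _ _
    rw [hq]
    nth_rewrite 1 [← DK.expand hd hv y]
    rw [← hsplit]
    abel
  have hnz : ‖z‖^2 = ∑ i ∈ T, (⟪w i, y - q⟫)^2 := by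
    rw [← real_inner_self_eq_norm_sq, hzdef]
    have := hw.inner_sum (fun i => (⟪w i, y - q⟫)) (fun i => (⟪w i, y - q⟫)) T
    rw [this]
    simp only [starRingEnd_apply, star_trivial]
    exact Finset.sum_congr rfl fun i _ => by ring
  have hne : ∀ j ∈ S, ∀ i ∈ T, δ ≤ mu i - lam j := by
    intro j hj i hi
    rw [hS, Finset.mem_filter] at hj
    rw [hT, Finset.mem_filter] at hi
    have h1 : lam j ≤ lam ⟨k, hkd⟩ := hlam (by rw [Fin.le_def]; simpa using Nat.le_of_not_lt hj.2)
    have h2 : mu ⟨k - 1, lt_of_le_of_lt (Nat.sub_le k 1) hkd⟩ ≤ mu i := hmu (by rw [Fin.le_def]; simp; omega)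
    linarith
  have hcoef : ∀ i ∈ T, ⟪w i, y - q⟫ = ∑ j ∈ S, ⟪v j, y⟫ * ⟪w i, v j⟫ := by
    intro i _
    rw [hrs, inner_sum]
    exact Finset.sum_congr rfl fun j _ => real_inner_smul_right _ _ _
  have hkey : ‖z‖^2 = ∑ j ∈ S, ∑ i ∈ T,
      (⟪v j, y⟫) * (⟪w i, y - q⟫) * ⟪v j, (Sh - Sg) (w i)⟫ / (mu i - lam j) := by
    rw [hnz]
    rw [show (∑ j ∈ S, ∑ i ∈ T,
        (⟪v j, y⟫) * (⟪w i, y - q⟫) * ⟪v j, (Sh - Sg) (w i)⟫ / (mu i - lam j))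
      = ∑ i ∈ T, ∑ j ∈ S,
        (⟪v j, y⟫) * (⟪w i, y - q⟫) * ⟪v j, (Sh - Sg) (w i)⟫ / (mu i - lam j)
      from Finset.sum_comm]
    refine Finset.sum_congr rfl fun i hi => ?_
    calc (⟪w i, y - q⟫)^2 = ⟪w i, y - q⟫ * ⟪w i, y - q⟫ := sq _
      _ = ∑ j ∈ S, ⟪w i, y - q⟫ * (⟪v j, y⟫ * ⟪w i, v j⟫) := by
          rw [← Finset.mul_sum, ← hcoef i hi]
      _ = ∑ j ∈ S, (⟪v j, y⟫) * (⟪w i, y - q⟫) * ⟪v j, (Sh - Sg) (w i)⟫ / (mu i - lam j) := by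
          refine Finset.sum_congr rfl fun j hj => ?_
          have hd0 : mu i - lam j ≠ 0 := by
            have := hne j hj i hi; linarith
          have hent := DK.entry hw hv hSh hSg j i
          rw [← hent, real_inner_comm (v j) (w i)]
          field_simp
  have hbd := DK.core hw hv (Sh - Sg) S T (fun j => ⟪v j, y⟫) (fun i => ⟪w i, y - q⟫) lam mu
      (lam ⟨k, hkd⟩) (mu ⟨k - 1, lt_of_le_of_lt (Nat.sub_le k 1) hkd⟩) δ hδ
      (fun j hj => by
        rw [hS, Finset.mem_filter] at hj
        exact hlam (by rw [Fin.le_def]; simpa using Nat.le_of_not_lt hj.2))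
      (fun i hi => by
        rw [hT, Finset.mem_filter] at hi
        exact hmu (by rw [Fin.le_def]; simp; omega))
      hgap
  rw [← hkey] at hbd
  rw [abs_of_nonneg (by positivity)] at hbd
  have hzn : Real.sqrt (∑ i ∈ T, (⟪w i, y - q⟫)^2) = ‖z‖ := by
    rw [← hnz, Real.sqrt_sq (norm_nonneg z)]
  have hyn : Real.sqrt (∑ j ∈ S, (⟪v j, y⟫)^2) ≤ ‖y‖ := by
    have h1 : ∑ j ∈ S, (⟪v j, y⟫)^2 ≤ ∑ j, (⟪v j, y⟫)^2 :=
      Finset.sum_le_sum_of_subset_of_nonneg (Finset.subset_univ S)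
        (fun j _ _ => sq_nonneg _)
    rw [DK.parseval hd hv y] at h1
    have := Real.sqrt_le_sqrt h1
    rwa [Real.sqrt_sq (norm_nonneg y)] at this
  rw [hzn] at hbd
  rcases eq_or_lt_of_le (norm_nonneg z) with h0 | hpos
  · rw [← h0]
    positivity
  · have h2 : ‖z‖^2 ≤ ‖Sh - Sg‖ / δ * ‖y‖ * ‖z‖ := by
      calc ‖z‖^2 ≤ ‖Sh - Sg‖ / δ * Real.sqrt (∑ j ∈ S, (⟪v j, y⟫)^2) * ‖z‖ := hbd
        _ ≤ ‖Sh - Sg‖ / δ * ‖y‖ * ‖z‖ := by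
            apply mul_le_mul_of_nonneg_right _ (norm_nonneg z)
            apply mul_le_mul_of_nonneg_left hyn
            positivity
    have h3 : ‖z‖ * ‖z‖ ≤ (‖Sh - Sg‖ / δ * ‖y‖) * ‖z‖ := by nlinarith
    exact le_of_mul_le_mul_right h3 hpos

end DKaux

/-- Davis–Kahan perturbation bound for PCA. Suppose `Σ = Σ_i λ_i v_i v_iᵀ` and
`Σ̂ = Σ_i μ_i w_i w_iᵀ` are PSD operators with orthonormal eigenbases `v`, `w` and
decreasing eigenvalues, `P_k`, `P̂_k` the orthogonal projectors onto the top-`k`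
eigenspaces, and `Δ_k = λ_k − λ_{k+1} > 0` the spectral gap. If
`‖Σ̂ − Σ‖_op ≤ Δ_k / 2`, then `‖P̂_k − P_k‖_op ≤ C·(2/Δ_k)·‖Σ̂ − Σ‖_op` for a universal
constant `C`. (Eigenvalues are `0`-indexed: the top `k` are indices `i < k`, and the gap
is `λ_{k-1} − λ_k` in `0`-indexing.) -/
theorem stmt16 :
    ∃ C : ℝ, 0 < C ∧
      ∀ (d k : ℕ) (hk1 : 1 ≤ k) (hkd : k < d)
        (Sg Sh : EuclideanSpace ℝ (Fin d) →L[ℝ] EuclideanSpace ℝ (Fin d))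
        (lam mu : Fin d → ℝ) (v w : Fin d → EuclideanSpace ℝ (Fin d)),
        Orthonormal ℝ v → Orthonormal ℝ w →
        Antitone lam → Antitone mu →
        (∀ i, 0 ≤ lam i) → (∀ i, 0 ≤ mu i) →
        (∀ x, Sg x = ∑ i, lam i • ((inner ℝ (v i) x : ℝ) • v i)) →
        (∀ x, Sh x = ∑ i, mu i • ((inner ℝ (w i) x : ℝ) • w i)) →
        ∀ (P Ph : EuclideanSpace ℝ (Fin d) →L[ℝ] EuclideanSpace ℝ (Fin d)),
        (∀ x, P x = ∑ i ∈ Finset.univ.filter fun i : Fin d => (i : ℕ) < k,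
            (inner ℝ (v i) x : ℝ) • v i) →
        (∀ x, Ph x = ∑ i ∈ Finset.univ.filter fun i : Fin d => (i : ℕ) < k,
            (inner ℝ (w i) x : ℝ) • w i) →
        0 < lam ⟨k - 1, by omega⟩ - lam ⟨k, hkd⟩ →
        ‖Sh - Sg‖ ≤ (lam ⟨k - 1, by omega⟩ - lam ⟨k, hkd⟩) / 2 →
        ‖Ph - P‖ ≤ C * (2 / (lam ⟨k - 1, by omega⟩ - lam ⟨k, hkd⟩)) * ‖Sh - Sg‖ := by
  refine ⟨2, by norm_num, ?_⟩
  intro d k hk1 hkd Sg Sh lam mu v w hv hw hlam hmu hlam0 hmu0 hSg hSh P Ph hP hPh hΔ hE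
  set Δ : ℝ := lam ⟨k - 1, by omega⟩ - lam ⟨k, hkd⟩ with hΔdef
  set δ : ℝ := Δ / 2 with hδdef
  have hδ : 0 < δ := by rw [hδdef]; linarith
  set ε : ℝ := ‖Sh - Sg‖ with hεdef
  have hε0 : 0 ≤ ε := norm_nonneg _
  have hεδ : ε ≤ δ := hE
  have hkd1 : k - 1 < d := by omega
  have weylA : mu ⟨k, hkd⟩ ≤ lam ⟨k, hkd⟩ + ε :=
    DK.weyl hkd Sg Sh lam mu v w hv hw hlam hmu hSg hSh
  have weylB : lam ⟨k - 1, hkd1⟩ ≤ mu ⟨k - 1, hkd1⟩ + ε := by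
    have := DK.weyl hkd1 Sh Sg mu lam w v hw hv hmu hlam hSh hSg
    rwa [norm_sub_rev] at this
  have hgapA : mu ⟨k, hkd⟩ + δ ≤ lam ⟨k - 1, by omega⟩ := by
    have h1 : lam ⟨k - 1, (by omega : k - 1 < d)⟩ - lam ⟨k, hkd⟩ = Δ := by rw [hΔdef]
    linarith
  have hgapB : lam ⟨k, hkd⟩ + δ ≤ mu ⟨k - 1, by omega⟩ := by
    have h1 : lam ⟨k - 1, (by omega : k - 1 < d)⟩ - lam ⟨k, hkd⟩ = Δ := by rw [hΔdef]
    linarith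
  have hC0 : 0 ≤ 2 * (2 / Δ) * ε :=
    mul_nonneg (mul_nonneg (by norm_num) (div_nonneg (by norm_num) hΔ.le)) hε0
  apply ContinuousLinearMap.opNorm_le_bound _ hC0
  intro x
  rw [ContinuousLinearMap.sub_apply]
  have hdecomp : Ph x - P x = Ph (x - P x) - (P x - Ph (P x)) := by
    rw [map_sub]
    abel
  have hB : ‖Ph (x - P x)‖ ≤ ε / δ * ‖x‖ := by
    rw [hPh (x - P x)]
    exact DK.sideB hk1 hkd hv hw hlam hmu hSg hSh hδ hgapB (P x) x (hP x)
  have hA : ‖P x - Ph (P x)‖ ≤ ε / δ * ‖x‖ := by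
    rw [hPh (P x)]
    exact DK.sideA hk1 hkd hv hw hlam hmu hSg hSh hδ hgapA (P x) x (hP x)
  calc ‖Ph x - P x‖ ≤ ‖Ph (x - P x)‖ + ‖P x - Ph (P x)‖ := by
        rw [hdecomp]; exact norm_sub_le _ _
    _ ≤ ε / δ * ‖x‖ + ε / δ * ‖x‖ := add_le_add hB hA
    _ = 2 * (2 / Δ) * ε * ‖x‖ := by
        rw [hδdef]
        field_simp
        ring
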